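/- Let $S \subseteq \mathbb{Z}^3$ be the additive submonoid generated by the seven vectors $(1,0,0), (2,0,0), (2,0,1), (2,0,3), (2,0,4), (2,1,0), (2,1,1)$ (the columns of $\hat{A}_{(3)}$). Then $\hat{\beta}_{(3)} = (3,0,2)$ is a hole of $S$: namely $(3,0,2) \notin S$, and for every $s \in S$ with $s \ne 0$ one has $(3,0,2) + s \in S$. -/

import Mathlib

private def cc (z : ℤ) : ℤ := if z ≤ 0 then 0 else if z = 1 then 2 else if z = 2 then 4 else 2

private lemma cc_nonneg (z : ℤ) : 0 ≤ cc z := by unfold cc; split_ifs <;> norm_num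

private lemma cc_le_four (z : ℤ) : cc z ≤ 4 := by unfold cc; split_ifs <;> norm_num

private lemma cc_ge_two {z : ℤ} (h : 1 ≤ z) : 2 ≤ cc z := by
  unfold cc; split_ifs <;> omega

private lemma cc_subadd {z1 z2 : ℤ} (h1 : 0 ≤ z1) (h2 : 0 ≤ z2) :
    cc (z1 + z2) ≤ cc z1 + cc z2 := by
  rcases eq_or_lt_of_le h1 with rfl | hp1
  · simp only [zero_add]; have := cc_nonneg (0 : ℤ)
    have : cc (0 : ℤ) = 0 := by unfold cc; norm_num
    omega
  rcases eq_or_lt_of_le h2 with rfl | hp2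
  · have h0 : cc (0 : ℤ) = 0 := by unfold cc; norm_num
    simp only [add_zero]; omega
  · have := cc_le_four (z1 + z2)
    have := cc_ge_two hp1
    have := cc_ge_two hp2
    omega

private def M : AddSubmonoid (ℤ × ℤ × ℤ) where
  carrier := {p | 0 ≤ p.2.1 ∧ 0 ≤ p.2.2 ∧ (0 < p.2.1 ∨ cc p.2.2 ≤ p.1)}
  zero_mem' := by
    refine ⟨le_refl 0, le_refl 0, Or.inr ?_⟩
    show cc 0 ≤ 0; unfold cc; norm_num
  add_mem' := by
    rintro ⟨a1, b1, c1⟩ ⟨a2, b2, c2⟩ ⟨hb1, hc1, h1⟩ ⟨hb2, hc2, h2⟩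
    simp only [Set.mem_setOf_eq, Prod.mk_add_mk] at *
    refine ⟨by omega, by omega, ?_⟩
    rcases h1 with h1 | h1
    · exact Or.inl (by omega)
    rcases h2 with h2 | h2
    · exact Or.inl (by omega)
    · refine Or.inr ?_
      have := cc_subadd hc1 hc2
      omega

private lemma decomp {T : Set (ℤ × ℤ × ℤ)} {s : ℤ × ℤ × ℤ}
    (hs : s ∈ AddSubmonoid.closure T) :
    s = 0 ∨ ∃ g ∈ T, ∃ t ∈ AddSubmonoid.closure T, s = g + t := by
  induction hs using AddSubmonoid.closure_induction with
  | mem x hx => exact Or.inr ⟨x, hx, 0, zero_mem _, (add_zero x).symm⟩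
  | zero => exact Or.inl rfl
  | add x y hx hy ihx ihy =>
    rcases ihx with rfl | ⟨g, hg, t, ht, rfl⟩
    · rcases ihy with rfl | ⟨g, hg, t, ht, rfl⟩
      · exact Or.inl (by simp)
      · exact Or.inr ⟨g, hg, t, ht, by simp⟩
    · exact Or.inr ⟨g, hg, t + y, add_mem ht hy, by rw [add_assoc]⟩

/-- `(3,0,2)` is a hole of the submonoid of `ℤ³` generated by the columns of `Â₍₃₎`,
namely `(1,0,0), (2,0,0), (2,0,1), (2,0,3), (2,0,4), (2,1,0), (2,1,1)`. -/
theorem beta_hat_three_is_hole :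
    let S : AddSubmonoid (ℤ × ℤ × ℤ) :=
      AddSubmonoid.closure
        {(1, 0, 0), (2, 0, 0), (2, 0, 1), (2, 0, 3), (2, 0, 4), (2, 1, 0), (2, 1, 1)}
    ((3, 0, 2) : ℤ × ℤ × ℤ) ∉ S ∧
      ∀ s ∈ S, s ≠ 0 → ((3, 0, 2) : ℤ × ℤ × ℤ) + s ∈ S := by
  intro S
  have hgen : ∀ p ∈ ({(1, 0, 0), (2, 0, 0), (2, 0, 1), (2, 0, 3), (2, 0, 4), (2, 1, 0),
      (2, 1, 1)} : Set (ℤ × ℤ × ℤ)), p ∈ S := fun p hp => AddSubmonoid.subset_closure hp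
  have h1 : ((1, 0, 0) : ℤ × ℤ × ℤ) ∈ S := hgen _ (by simp)
  have h2 : ((2, 0, 0) : ℤ × ℤ × ℤ) ∈ S := hgen _ (by simp)
  have h3 : ((2, 0, 1) : ℤ × ℤ × ℤ) ∈ S := hgen _ (by simp)
  have h4 : ((2, 0, 3) : ℤ × ℤ × ℤ) ∈ S := hgen _ (by simp)
  have h5 : ((2, 0, 4) : ℤ × ℤ × ℤ) ∈ S := hgen _ (by simp)
  have h6 : ((2, 1, 0) : ℤ × ℤ × ℤ) ∈ S := hgen _ (by simp)
  have h7 : ((2, 1, 1) : ℤ × ℤ × ℤ) ∈ S := hgen _ (by simp)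
  constructor
  · intro hmem
    have hle : S ≤ M := AddSubmonoid.closure_le.mpr (by
      rintro p hp
      simp only [Set.mem_insert_iff, Set.mem_singleton_iff] at hp
      rcases hp with rfl | rfl | rfl | rfl | rfl | rfl | rfl <;>
        refine ⟨by norm_num, by norm_num, ?_⟩ <;>
        simp only [cc] <;> norm_num)
    have := hle hmem
    obtain ⟨-, -, h⟩ := this
    rcases h with h | h
    · norm_num at h
    · simp only [cc] at h; norm_num at h
  · intro s hs hne
    rcases decomp hs with rfl | ⟨g, hg, t, ht, rfl⟩
    · exact absurd rfl hne
    have key : ((3, 0, 2) : ℤ × ℤ × ℤ) + g ∈ S := by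
      simp only [Set.mem_insert_iff, Set.mem_singleton_iff] at hg
      rcases hg with rfl | rfl | rfl | rfl | rfl | rfl | rfl
      · have : ((3, 0, 2) : ℤ × ℤ × ℤ) + (1, 0, 0) = (2, 0, 1) + (2, 0, 1) := by decide
        rw [this]; exact add_mem h3 h3
      · have : ((3, 0, 2) : ℤ × ℤ × ℤ) + (2, 0, 0) = (1, 0, 0) + ((2, 0, 1) + (2, 0, 1)) := by
          decide
        rw [this]; exact add_mem h1 (add_mem h3 h3)
      · have : ((3, 0, 2) : ℤ × ℤ × ℤ) + (2, 0, 1) = (1, 0, 0) + ((2, 0, 0) + (2, 0, 3)) := by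
          decide
        rw [this]; exact add_mem h1 (add_mem h2 h4)
      · have : ((3, 0, 2) : ℤ × ℤ × ℤ) + (2, 0, 3) = (1, 0, 0) + ((2, 0, 1) + (2, 0, 4)) := by
          decide
        rw [this]; exact add_mem h1 (add_mem h3 h5)
      · have : ((3, 0, 2) : ℤ × ℤ × ℤ) + (2, 0, 4) = (1, 0, 0) + ((2, 0, 3) + (2, 0, 3)) := by
          decide
        rw [this]; exact add_mem h1 (add_mem h4 h4)
      · have : ((3, 0, 2) : ℤ × ℤ × ℤ) + (2, 1, 0) = (1, 0, 0) + ((2, 1, 1) + (2, 0, 1)) := by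
          decide
        rw [this]; exact add_mem h1 (add_mem h7 h3)
      · have : ((3, 0, 2) : ℤ × ℤ × ℤ) + (2, 1, 1) = (1, 0, 0) + ((2, 1, 0) + (2, 0, 3)) := by
          decide
        rw [this]; exact add_mem h1 (add_mem h6 h4)
    have : ((3, 0, 2) : ℤ × ℤ × ℤ) + (g + t) = ((3, 0, 2) + g) + t := by rw [add_assoc]
    rw [this]
    exact add_mem key ht
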